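/- Let κ ≥ 1 be a real number and let φ : [0, 1/3] → ℝ be nondecreasing and differentiable with φ(0) > 0 and φ(1/3) ≤ (κ+1)·φ(0). Then there exists r ∈ [0, 1/3] with φ'(r) ≤ 3·ln(κ+1)·φ(r). -/

import Mathlib

/-- the analytic core of the Garg–Vazirani–Yannakakis region-growing
argument: if `φ : [0,1/3] → ℝ` is nondecreasing and differentiable with `φ(0) > 0` and
`φ(1/3) ≤ (κ+1)·φ(0)`, then some `r ∈ [0,1/3]` has `φ'(r) ≤ 3·ln(κ+1)·φ(r)`. -/
theorem region_growing_radius (κ : ℝ) (hκ : 1 ≤ κ) (φ : ℝ → ℝ)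
    (hmono : MonotoneOn φ (Set.Icc 0 (1/3)))
    (hdiff : DifferentiableOn ℝ φ (Set.Icc 0 (1/3)))
    (h0 : 0 < φ 0) (h13 : φ (1/3) ≤ (κ + 1) * φ 0) :
    ∃ r ∈ Set.Icc (0 : ℝ) (1/3),
      derivWithin φ (Set.Icc 0 (1/3)) r ≤ 3 * Real.log (κ + 1) * φ r := by
  by_contra hcon
  push_neg at hcon
  set c : ℝ := 3 * Real.log (κ + 1) with hc
  set s : Set ℝ := Set.Icc (0:ℝ) (1/3) with hs
  have hκ1 : (1:ℝ) < κ + 1 := by linarith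
  set ψ : ℝ → ℝ := fun x => Real.exp (-c * x) * φ x with hψ
  have hcont : ContinuousOn ψ s := by
    exact ((Real.continuous_exp.comp (continuous_const.mul continuous_id)).continuousOn).mul
      hdiff.continuousOn
  have hderiv : ∀ x ∈ interior s, HasDerivWithinAt ψ
      (Real.exp (-c * x) * (derivWithin φ s x - c * φ x)) (interior s) x := by
    intro x hx
    have hxs : x ∈ s := interior_subset hx
    have hφ : HasDerivWithinAt φ (derivWithin φ s x) (interior s) x :=
      ((hdiff x hxs).hasDerivWithinAt).mono interior_subset
    have hexp : HasDerivAt (fun x => Real.exp (-c * x)) (-c * Real.exp (-c * x)) x := by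
      have h1 : HasDerivAt (fun x : ℝ => -c * x) (-c) x := by
        simpa using (hasDerivAt_id x).const_mul (-c)
      simpa [mul_comm] using h1.exp
    have := (hexp.hasDerivWithinAt (s := interior s)).mul hφ
    refine this.congr_deriv ?_
    ring
  have hpos : ∀ x ∈ interior s, 0 < Real.exp (-c * x) * (derivWithin φ s x - c * φ x) := by
    intro x hx
    have hxs : x ∈ s := interior_subset hx
    have := hcon x hxs
    have : 0 < derivWithin φ s x - c * φ x := by linarith
    positivity
  have hsm : StrictMonoOn ψ s :=
    strictMonoOn_of_hasDerivWithinAt_pos (convex_Icc _ _) hcont hderiv hpos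
  have h03 : (0:ℝ) ∈ s := by constructor <;> norm_num
  have h13' : (1/3:ℝ) ∈ s := by constructor <;> norm_num
  have hlt : ψ 0 < ψ (1/3) := hsm h03 h13' (by norm_num)
  have hψ0 : ψ 0 = φ 0 := by simp [hψ]
  have hψ13 : ψ (1/3) = φ (1/3) / (κ + 1) := by
    have : Real.exp (-c * (1/3)) = 1 / (κ + 1) := by
      rw [hc]
      have : -(3 * Real.log (κ + 1)) * (1/3) = -Real.log (κ + 1) := by ring
      rw [this, Real.exp_neg, Real.exp_log (by linarith)]
      ring
    show Real.exp (-c * (1/3)) * φ (1/3) = _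
    rw [this]; ring
  have : φ (1/3) / (κ + 1) ≤ φ 0 := by
    rw [div_le_iff₀ (by linarith)]
    linarith [h13]
  rw [hψ0, hψ13] at hlt
  linarith
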